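/- Let A ∈ SL_n(ℝ) be well-rounded with S₁(A) = {±v₁,...,±v_n} for linearly independent v₁,...,v_n ∈ ℤ^n, and identify Δ (the positive diagonal subgroup of SL_n(ℝ)) with ℝ^{n-1} via (a₁,...,a_{n-1}) ↦ diag(e^{a₁},...,e^{a_{n-1}}, e^{-a₁-...-a_{n-1}}). Let B be the matrix with columns v₁,...,v_n. Then there exists ε > 0 such that for all x ∈ ℝ^{n-1} with 0 < |x| ≤ ε, the element A·B·D(x)·B⁻¹ is not well-rounded, where D(x) ∈ Δ is the diagonal matrix corresponding to x. -/

import Mathlib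

set_option maxHeartbeats 1000000


open Matrix Submodule Module

/-- The Euclidean norm of a vector in `ℝⁿ`. -/
noncomputable def euclNorm {n : ℕ} (w : Fin n → ℝ) : ℝ := Real.sqrt (∑ i, (w i) ^ 2)

/-- The real vector associated to an integer vector. -/
def intVec {n : ℕ} (v : Fin n → ℤ) : Fin n → ℝ := fun i => (v i : ℝ)

/-- The systole (first minimum) of the lattice `Aℤⁿ`. -/
noncomputable def syst1 {n : ℕ} (A : Matrix (Fin n) (Fin n) ℝ) : ℝ :=
  sInf {r : ℝ | ∃ v : Fin n → ℤ, v ≠ 0 ∧ euclNorm (A.mulVec (intVec v)) = r}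

/-- The `i`-th systole (Minkowski's `i`-th successive minimum) of the lattice `Aℤⁿ`. -/
noncomputable def systI {n : ℕ} (A : Matrix (Fin n) (Fin n) ℝ) (i : ℕ) : ℝ :=
  sInf {r : ℝ | i ≤ Module.finrank ℝ (Submodule.span ℝ
    (intVec '' {v : Fin n → ℤ | euclNorm (A.mulVec (intVec v)) < r}))}

/-- The set of shortest (nonzero) integer vectors of `A`. -/
noncomputable def S1 {n : ℕ} (A : Matrix (Fin n) (Fin n) ℝ) : Set (Fin n → ℤ) :=
  {v | v ≠ 0 ∧ euclNorm (A.mulVec (intVec v)) = syst1 A}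

/-- `A` is well-rounded if its shortest vectors span `ℝⁿ`. -/
noncomputable def WellRounded {n : ℕ} (A : Matrix (Fin n) (Fin n) ℝ) : Prop :=
  Submodule.span ℝ (intVec '' S1 A) = ⊤

/-- The span of the integer vectors realized up to the `i`-th minimum. -/
noncomputable def LambdaI {n : ℕ} (A : Matrix (Fin n) (Fin n) ℝ) (i : ℕ) :
    Submodule ℝ (Fin n → ℝ) :=
  Submodule.span ℝ (intVec '' {v : Fin n → ℤ | euclNorm (A.mulVec (intVec v)) ≤ systI A i})

/-- The real matrix associated to an element of `SL_n(ℤ)`. -/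
def SLZtoR {n : ℕ} (γ : Matrix.SpecialLinearGroup (Fin n) ℤ) : Matrix (Fin n) (Fin n) ℝ :=
  (γ : Matrix (Fin n) (Fin n) ℤ).map (Int.cast)

lemma euclNorm_eq_norm {n : ℕ} (w : Fin n → ℝ) :
    euclNorm w = ‖(WithLp.equiv 2 (Fin n → ℝ)).symm w‖ := by
  rw [EuclideanSpace.norm_eq]
  unfold euclNorm
  congr 1
  refine Finset.sum_congr rfl fun i _ => ?_
  rw [WithLp.equiv_symm_apply, WithLp.ofLp_toLp, Real.norm_eq_abs, sq_abs]

lemma euclNorm_nonneg {n : ℕ} (w : Fin n → ℝ) : 0 ≤ euclNorm w := Real.sqrt_nonneg _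

lemma euclNorm_eq_zero {n : ℕ} {w : Fin n → ℝ} : euclNorm w = 0 ↔ w = 0 := by
  unfold euclNorm
  rw [Real.sqrt_eq_zero (Finset.sum_nonneg fun i _ => sq_nonneg _),
    Finset.sum_eq_zero_iff_of_nonneg fun i _ => sq_nonneg _]
  constructor
  · intro h; funext i
    exact pow_eq_zero_iff (by norm_num) |>.mp (h i (Finset.mem_univ i))
  · intro h i _; rw [h]; simp

lemma euclNorm_pos {n : ℕ} {w : Fin n → ℝ} (h : w ≠ 0) : 0 < euclNorm w :=
  lt_of_le_of_ne (euclNorm_nonneg w) fun h0 => h (euclNorm_eq_zero.mp h0.symm)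

lemma euclNorm_neg {n : ℕ} (w : Fin n → ℝ) : euclNorm (-w) = euclNorm w := by
  unfold euclNorm; congr 1; refine Finset.sum_congr rfl fun i _ => ?_
  rw [Pi.neg_apply, neg_sq]

lemma euclNorm_smul {n : ℕ} (c : ℝ) (w : Fin n → ℝ) : euclNorm (c • w) = |c| * euclNorm w := by
  unfold euclNorm
  rw [← Real.sqrt_sq_eq_abs, ← Real.sqrt_mul (sq_nonneg c), Finset.mul_sum]
  congr 1
  refine Finset.sum_congr rfl fun i _ => ?_
  rw [Pi.smul_apply, smul_eq_mul, mul_pow]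

lemma abs_le_euclNorm {n : ℕ} (w : Fin n → ℝ) (i : Fin n) : |w i| ≤ euclNorm w := by
  rw [← Real.sqrt_sq_eq_abs]
  exact Real.sqrt_le_sqrt (Finset.single_le_sum (f := fun j => w j ^ 2)
    (fun j _ => sq_nonneg _) (Finset.mem_univ i))

lemma euclNorm_add_le {n : ℕ} (u w : Fin n → ℝ) : euclNorm (u + w) ≤ euclNorm u + euclNorm w := by
  rw [euclNorm_eq_norm, euclNorm_eq_norm, euclNorm_eq_norm]
  have : (WithLp.equiv 2 (Fin n → ℝ)).symm (u + w) =
      (WithLp.equiv 2 (Fin n → ℝ)).symm u + (WithLp.equiv 2 (Fin n → ℝ)).symm w := rfl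
  rw [this]; exact norm_add_le _ _

set_option synthInstance.maxHeartbeats 1000000 in
lemma exists_mulVec_bound {n : ℕ} (C : Matrix (Fin n) (Fin n) ℝ) :
    ∃ K ≥ (0:ℝ), ∀ w, euclNorm (C.mulVec w) ≤ K * euclNorm w := by
  let L := LinearMap.toContinuousLinearMap (Matrix.toEuclideanLin C)
  refine ⟨‖L‖, norm_nonneg _, fun w => ?_⟩
  have h := L.le_opNorm ((WithLp.equiv 2 (Fin n → ℝ)).symm w)
  rw [euclNorm_eq_norm, euclNorm_eq_norm]
  simpa [L] using h

lemma euclNorm_pointwise_le {n : ℕ} (c : Fin n → ℝ) (u : Fin n → ℝ) (η : ℝ) (hη : 0 ≤ η)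
    (hc : ∀ j, |c j| ≤ η) : euclNorm (fun j => c j * u j) ≤ η * euclNorm u := by
  unfold euclNorm
  rw [← Real.sqrt_sq hη, ← Real.sqrt_mul (sq_nonneg η), Finset.mul_sum]
  apply Real.sqrt_le_sqrt
  refine Finset.sum_le_sum fun j _ => ?_
  rw [mul_pow]
  have h1 : c j ^ 2 ≤ η ^ 2 := by
    rw [← sq_abs]
    exact pow_le_pow_left₀ (abs_nonneg _) (hc j) 2
  exact mul_le_mul_of_nonneg_right h1 (sq_nonneg _)


lemma intVec_eq_zero {n : ℕ} {v : Fin n → ℤ} : intVec v = 0 ↔ v = 0 := by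
  constructor
  · intro h; funext i
    have := congrFun h i
    simpa [intVec] using this
  · intro h; funext i; simp [h, intVec]

lemma intVec_neg {n : ℕ} (v : Fin n → ℤ) : intVec (-v) = -intVec v := by
  funext i; simp [intVec]

lemma abs_exp_sub_one_le (t : ℝ) : |Real.exp t - 1| ≤ Real.exp |t| - 1 := by
  rcases le_or_gt 0 t with h | h
  · rw [abs_of_nonneg h, abs_of_nonneg (by linarith [Real.one_le_exp h])]
  · rw [abs_of_neg h, abs_of_nonpos (by linarith [Real.exp_lt_one_iff.mpr h] : Real.exp t - 1 ≤ 0)]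
    have hc := Real.one_le_cosh t
    rw [Real.cosh_eq] at hc
    linarith

lemma finite_small {n : ℕ} (A : Matrix (Fin n) (Fin n) ℝ) (hA : IsUnit A) (R : ℝ)
    (K : ℝ) (hK0 : 0 ≤ K) (hK : ∀ w, euclNorm (A⁻¹.mulVec w) ≤ K * euclNorm w) :
    {w : Fin n → ℤ | euclNorm (A.mulVec (intVec w)) ≤ R}.Finite := by
  have hdet : IsUnit A.det := A.isUnit_iff_isUnit_det.mp hA
  set c : ℤ := ⌈K * R⌉ with hc
  have key : ∀ w : Fin n → ℤ, euclNorm (A.mulVec (intVec w)) ≤ R → ∀ i, w i ∈ Set.Icc (-c) c := by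
    intro w hw i
    have h1 : intVec w = A⁻¹.mulVec (A.mulVec (intVec w)) := by
      rw [Matrix.mulVec_mulVec, Matrix.nonsing_inv_mul A hdet, Matrix.one_mulVec]
    have h2 : euclNorm (intVec w) ≤ K * R := by
      rw [h1]
      calc euclNorm (A⁻¹.mulVec (A.mulVec (intVec w))) ≤ K * euclNorm (A.mulVec (intVec w)) := hK _
        _ ≤ K * R := mul_le_mul_of_nonneg_left hw hK0
    have h3 : |(w i : ℝ)| ≤ K * R := le_trans (abs_le_euclNorm (intVec w) i) h2
    have h4 : |(w i : ℝ)| ≤ (c : ℝ) := le_trans h3 (Int.le_ceil _)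
    rw [← Int.cast_abs] at h4
    have h5 : |w i| ≤ c := by exact_mod_cast h4
    exact Set.mem_Icc.mpr (abs_le.mp h5)
  apply Set.Finite.subset (Set.Finite.pi (fun i : Fin n => Set.finite_Icc (-c) c))
  intro w hw
  simp only [Set.mem_pi, Set.mem_univ, forall_true_left]
  exact fun i => key w hw i

lemma sum_d_eq_zero {n : ℕ} (hn : 2 ≤ n) (x : Fin (n-1) → ℝ) :
    ∑ j : Fin n, (if h : (j:ℕ) < n - 1 then x ⟨j, h⟩ else -∑ i, x i) = 0 := by
  have h1 : n - 1 + 1 = n := by omega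
  rw [← Fin.sum_congr' _ h1, Fin.sum_univ_castSucc]
  have hlast : ¬ ((Fin.cast h1 (Fin.last (n-1)) : Fin n) : ℕ) < n - 1 := by
    simp
  rw [dif_neg hlast]
  have hterm : ∀ i : Fin (n-1),
      (if h : ((Fin.cast h1 i.castSucc : Fin n) : ℕ) < n - 1 then x ⟨_, h⟩ else -∑ i, x i)
        = x i := by
    intro i
    rw [dif_pos (by simpa using i.isLt)]
    congr 1
  rw [Finset.sum_congr rfl fun i _ => hterm i]
  ring


/-- if `A` is well-rounded with exactly the `2n` shortest vectors
`{±v₁,…,±v_n}`, `B` is the matrix with columns `v₁,…,v_n` and `D(x)` the diagonal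
matrix `diag(e^{x₁},…,e^{x_{n-1}}, e^{-x₁-⋯-x_{n-1}})`, then for all sufficiently
small `x ≠ 0` the element `A·B·D(x)·B⁻¹` is not well-rounded. -/
theorem stmt15 (n : ℕ) (hn : 2 ≤ n) (A : Matrix.SpecialLinearGroup (Fin n) ℝ)
    (hwr : WellRounded (A : Matrix (Fin n) (Fin n) ℝ))
    (v : Fin n → (Fin n → ℤ))
    (hv : LinearIndependent ℝ fun i => intVec (v i))
    (hS : S1 (A : Matrix (Fin n) (Fin n) ℝ) = {w | ∃ i, w = v i ∨ w = -(v i)})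
    (B : Matrix (Fin n) (Fin n) ℝ)
    (hB : B = Matrix.of fun i j => ((v j i : ℝ))) :
    ∃ ε > (0 : ℝ), ∀ x : Fin (n - 1) → ℝ, 0 < euclNorm x → euclNorm x ≤ ε →
      ¬ WellRounded ((A : Matrix (Fin n) (Fin n) ℝ) * B *
        Matrix.diagonal (fun j : Fin n =>
          if h : (j : ℕ) < n - 1 then Real.exp (x ⟨j, h⟩)
          else Real.exp (-∑ i, x i)) * B⁻¹) := by
  classical
  set Am := (A : Matrix (Fin n) (Fin n) ℝ) with hAm
  have hAdet : IsUnit Am.det := by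
    rw [hAm, Matrix.SpecialLinearGroup.det_coe]; exact isUnit_one
  have hAunit : IsUnit Am := (Matrix.isUnit_iff_isUnit_det _).mpr hAdet
  have hBunit : IsUnit B := by
    rw [← Matrix.linearIndependent_cols_iff_isUnit]
    have hBt : (fun i => Bᵀ i) = fun i => intVec (v i) := by
      funext i; funext j; simp [hB, intVec]
    show LinearIndependent ℝ (fun i => Bᵀ i); rw [hBt]; exact hv
  have hBdet : IsUnit B.det := (Matrix.isUnit_iff_isUnit_det B).mp hBunit
  set m := syst1 Am with hmdef
  have hSmem : ∀ i, v i ∈ S1 Am := fun i => by rw [hS]; exact ⟨i, Or.inl rfl⟩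
  have hvR : ∀ i, intVec (v i) ≠ 0 := fun i => hv.ne_zero i
  have hvneZ : ∀ i, v i ≠ 0 := fun i h => hvR i (by rw [h]; exact intVec_eq_zero.mpr rfl)
  have hmv : ∀ i, euclNorm (Am.mulVec (intVec (v i))) = m := fun i => (hSmem i).2
  have hbdd : BddBelow {r : ℝ | ∃ u : Fin n → ℤ, u ≠ 0 ∧ euclNorm (Am.mulVec (intVec u)) = r} :=
    ⟨0, fun r ⟨u, _, hr⟩ => hr ▸ euclNorm_nonneg _⟩
  have hlow : ∀ w : Fin n → ℤ, w ≠ 0 → m ≤ euclNorm (Am.mulVec (intVec w)) := by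
    intro w hw
    rw [hmdef]
    unfold syst1
    exact csInf_le hbdd ⟨w, hw, rfl⟩
  have hAinj : Function.Injective Am.mulVec := Matrix.mulVec_injective_iff_isUnit.mpr hAunit
  have hn0 : 0 < n := by omega
  have hm0 : 0 < m := by
    rw [← hmv ⟨0, hn0⟩]
    apply euclNorm_pos
    intro h
    apply hvR ⟨0, hn0⟩
    apply hAinj
    rw [h, Matrix.mulVec_zero]
  obtain ⟨K1, hK10, hK1⟩ := exists_mulVec_bound (Am * B)
  obtain ⟨K2, hK20, hK2⟩ := exists_mulVec_bound B⁻¹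
  obtain ⟨K3, hK30, hK3⟩ := exists_mulVec_bound Am⁻¹
  obtain ⟨δ, hδ0, hgap⟩ : ∃ δ > 0, ∀ w : Fin n → ℤ, w ≠ 0 →
      (¬ ∃ i, w = v i ∨ w = -(v i)) → m + δ ≤ euclNorm (Am.mulVec (intVec w)) := by
    set T := {w : Fin n → ℤ | euclNorm (Am.mulVec (intVec w)) ≤ m + 1} ∩
      {w | w ≠ 0 ∧ ¬ ∃ i, w = v i ∨ w = -(v i)} with hT
    have hTfin : T.Finite := (finite_small Am hAunit (m+1) K3 hK30 hK3).inter_of_left _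
    have hTgt : ∀ w ∈ T, m < euclNorm (Am.mulVec (intVec w)) := by
      rintro w ⟨-, hw0, hwnot⟩
      refine lt_of_le_of_ne (hlow w hw0) ?_
      intro heq
      have hmemS : w ∈ S1 Am := ⟨hw0, heq.symm⟩
      rw [hS] at hmemS
      exact hwnot hmemS
    by_cases hne : T.Nonempty
    · set F := hTfin.toFinset.image (fun w => euclNorm (Am.mulVec (intVec w))) with hF
      have hFne : F.Nonempty := ((Set.Finite.toFinset_nonempty hTfin).mpr hne).image _
      have hFmin : m < F.min' hFne := by
        obtain ⟨w, hwF, hweq⟩ := Finset.mem_image.mp (F.min'_mem hFne)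
        rw [← hweq]; exact hTgt w (hTfin.mem_toFinset.mp hwF)
      refine ⟨min 1 (F.min' hFne - m), lt_min one_pos (by linarith), ?_⟩
      intro w hw0 hwnot
      by_cases hsmall : euclNorm (Am.mulVec (intVec w)) ≤ m + 1
      · have hmem : w ∈ T := ⟨hsmall, hw0, hwnot⟩
        have h1 : F.min' hFne ≤ euclNorm (Am.mulVec (intVec w)) :=
          Finset.min'_le _ _ (Finset.mem_image_of_mem _ (hTfin.mem_toFinset.mpr hmem))
        have h2 : min 1 (F.min' hFne - m) ≤ F.min' hFne - m := min_le_right _ _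
        linarith
      · push_neg at hsmall
        have h3 : min 1 (F.min' hFne - m) ≤ 1 := min_le_left _ _
        linarith
    · refine ⟨1, one_pos, fun w hw0 hwnot => ?_⟩
      by_contra hcon
      push_neg at hcon
      exact hne ⟨w, le_of_lt hcon, hw0, hwnot⟩
  set K := K1 * K2 * K3 with hKdef
  have hK0 : 0 ≤ K := by positivity
  have hmδ : 0 < m + δ := by linarith
  set θ := δ / (2*(K+1)*(m+δ)) with hθdef
  have hθ0 : 0 < θ := by
    apply div_pos hδ0
    nlinarith
  set ε := min 1 (Real.log (1+θ) / n) with hεdef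
  have hε0 : 0 < ε :=
    lt_min one_pos (div_pos (Real.log_pos (by linarith)) (by exact_mod_cast hn0))
  refine ⟨ε, hε0, ?_⟩
  intro x hx0 hxε
  set d : Fin n → ℝ := fun j => if h : (j:ℕ) < n - 1 then x ⟨j, h⟩ else -∑ i, x i with hd
  have hDfun : (fun j : Fin n => if h : (j:ℕ) < n-1 then Real.exp (x ⟨j,h⟩)
      else Real.exp (-∑ i, x i)) = fun j => Real.exp (d j) := by
    funext j
    rw [hd]
    exact (apply_dite Real.exp _ _ _).symm
  rw [hDfun]
  set D := Matrix.diagonal (fun j => Real.exp (d j)) with hDdef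
  set M := Am * B * D * B⁻¹ with hM
  have hdsum : ∑ j, d j = 0 := sum_d_eq_zero hn x
  have hdne : ∃ k, d k ≠ 0 := by
    have hxne : x ≠ 0 := by
      intro h
      rw [h, euclNorm_eq_zero.mpr rfl] at hx0
      exact lt_irrefl 0 hx0
    obtain ⟨k, hk⟩ := Function.ne_iff.mp hxne
    refine ⟨⟨k, lt_of_lt_of_le k.isLt (Nat.sub_le n 1)⟩, ?_⟩
    simp only [hd]
    rw [dif_pos (show ((⟨(k:ℕ), lt_of_lt_of_le k.isLt (Nat.sub_le n 1)⟩ : Fin n) : ℕ) < n - 1 from k.isLt)]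
    simpa using hk
  have hdbound : ∀ j, |d j| ≤ (n:ℝ) * euclNorm x := by
    intro j
    have hn1 : (1:ℝ) ≤ n := by exact_mod_cast hn0
    simp only [hd]
    rcases Nat.lt_or_ge (j:ℕ) (n-1) with hj | hj
    · rw [dif_pos hj]
      nlinarith [abs_le_euclNorm x ⟨(j:ℕ), hj⟩, euclNorm_nonneg x]
    · rw [dif_neg (not_lt.mpr hj)]
      rw [abs_neg]
      calc |∑ i, x i| ≤ ∑ i, |x i| := Finset.abs_sum_le_sum_abs _ _
        _ ≤ Finset.univ.card • euclNorm x :=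
            Finset.sum_le_card_nsmul _ _ _ (fun i _ => abs_le_euclNorm x i)
        _ = ((n-1 : ℕ) : ℝ) * euclNorm x := by
            rw [Finset.card_univ, Fintype.card_fin, nsmul_eq_mul]
        _ ≤ (n:ℝ) * euclNorm x := by
            have : ((n-1:ℕ):ℝ) ≤ (n:ℝ) := by exact_mod_cast Nat.sub_le n 1
            nlinarith [euclNorm_nonneg x]
  obtain ⟨jm, -, hjm⟩ := Finset.exists_min_image Finset.univ d ⟨⟨0, hn0⟩, Finset.mem_univ _⟩
  set dm := d jm with hdm
  have hjm' : ∀ k, dm ≤ d k := fun k => hjm k (Finset.mem_univ k)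
  have hdm0 : dm < 0 := by
    by_contra h
    push_neg at h
    obtain ⟨k, hk⟩ := hdne
    exact hk ((Finset.sum_eq_zero_iff_of_nonneg
      (fun j _ => le_trans h (hjm' j))).mp hdsum k (Finset.mem_univ k))
  obtain ⟨jx, hjx⟩ : ∃ j, d j ≠ dm := by
    by_contra hcon
    push_neg at hcon
    rw [Finset.sum_congr rfl (fun j _ => hcon j), Finset.sum_const, Finset.card_univ,
      Fintype.card_fin, nsmul_eq_mul] at hdsum
    nlinarith [show (0:ℝ) < n from by exact_mod_cast hn0]
  have hBv : ∀ i, B.mulVec (Pi.single i 1) = intVec (v i) := by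
    intro i
    rw [Matrix.mulVec_single_one]
    funext j
    simp [hB, intVec]
  have hBinv : ∀ i, B⁻¹.mulVec (intVec (v i)) = Pi.single i 1 := by
    intro i
    rw [← hBv i, Matrix.mulVec_mulVec, Matrix.nonsing_inv_mul B hBdet, Matrix.one_mulVec]
  have hMv : ∀ i, M.mulVec (intVec (v i)) = Real.exp (d i) • (Am.mulVec (intVec (v i))) := by
    intro i
    rw [hM, ← Matrix.mulVec_mulVec, hBinv i, ← Matrix.mulVec_mulVec, ← Matrix.mulVec_mulVec]
    have hDs : D.mulVec (Pi.single i 1) = Real.exp (d i) • (Pi.single i 1 : Fin n → ℝ) := by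
      funext j
      rw [hDdef]
      rw [Matrix.mulVec_diagonal]
      rcases eq_or_ne j i with rfl | hji
      · simp
      · simp [Pi.single_eq_of_ne hji]
    rw [hDs, Matrix.mulVec_smul, hBv i, Matrix.mulVec_smul]
  have hnormMv : ∀ i, euclNorm (M.mulVec (intVec (v i))) = Real.exp (d i) * m := by
    intro i
    rw [hMv i, euclNorm_smul, abs_of_pos (Real.exp_pos _), hmv i]
  have hnormMvneg : ∀ i, euclNorm (M.mulVec (intVec (-(v i)))) = Real.exp (d i) * m := by
    intro i
    rw [intVec_neg, Matrix.mulVec_neg, euclNorm_neg, hnormMv i]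
  have hεle : Real.exp ((n:ℝ) * euclNorm x) - 1 ≤ θ := by
    have h2 : euclNorm x ≤ Real.log (1+θ) / n := le_trans hxε (min_le_right _ _)
    rw [le_div_iff₀ (show (0:ℝ) < n from by exact_mod_cast hn0)] at h2
    have h1 : (n:ℝ) * euclNorm x ≤ Real.log (1+θ) := by linarith [h2]
    have h3 := Real.exp_le_exp.mpr h1
    rw [Real.exp_log (by linarith)] at h3
    linarith
  have hother : ∀ w : Fin n → ℤ, w ≠ 0 → (¬ ∃ i, w = v i ∨ w = -(v i)) →
      m + δ/2 ≤ euclNorm (M.mulVec (intVec w)) := by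
    intro w hw0 hwnot
    set u := intVec w with hu
    have hAu : m + δ ≤ euclNorm (Am.mulVec u) := hgap w hw0 hwnot
    set E := (Am * B) * (D - 1) * B⁻¹ with hE
    have hdec : M = E + Am := by
      have h1 : B * B⁻¹ = 1 := Matrix.mul_nonsing_inv B hBdet
      rw [hM, hE]
      have : (Am*B)*(D-1)*B⁻¹ + Am = Am*B*D*B⁻¹ := by
        calc (Am*B)*(D-1)*B⁻¹ + Am
            = (Am*B*D - Am*B)*B⁻¹ + Am := by rw [Matrix.mul_sub, Matrix.mul_one]
          _ = Am*B*D*B⁻¹ - Am*B*B⁻¹ + Am := by rw [Matrix.sub_mul]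
          _ = Am*B*D*B⁻¹ := by
              rw [Matrix.mul_assoc Am B B⁻¹, h1, Matrix.mul_one]
              abel
      rw [this]
    have hEbound : euclNorm (E.mulVec u) ≤ K * θ * euclNorm (Am.mulVec u) := by
      have e1 : E.mulVec u = (Am*B).mulVec ((D-1).mulVec (B⁻¹.mulVec u)) := by
        rw [hE, ← Matrix.mulVec_mulVec, ← Matrix.mulVec_mulVec]
      have hDsub : (D - 1) = Matrix.diagonal (fun j => Real.exp (d j) - 1) := by
        rw [hDdef, ← Matrix.diagonal_one, Matrix.diagonal_sub]
      set y := B⁻¹.mulVec u with hy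
      have e2 : (D-1).mulVec y = fun j => (Real.exp (d j) - 1) * y j := by
        funext j
        rw [hDsub, Matrix.mulVec_diagonal]
      set η := Real.exp ((n:ℝ) * euclNorm x) - 1 with hη
      have hη0 : 0 ≤ η := by
        have := Real.one_le_exp (show (0:ℝ) ≤ (n:ℝ) * euclNorm x by positivity)
        rw [hη]; linarith
      have e3 : euclNorm ((D-1).mulVec y) ≤ η * euclNorm y := by
        rw [e2]
        apply euclNorm_pointwise_le _ _ _ hη0
        intro j
        calc |Real.exp (d j) - 1| ≤ Real.exp |d j| - 1 := abs_exp_sub_one_le _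
          _ ≤ η := by
              rw [hη]
              have := Real.exp_le_exp.mpr (hdbound j)
              linarith
      have e4 : euclNorm u ≤ K3 * euclNorm (Am.mulVec u) := by
        have : u = Am⁻¹.mulVec (Am.mulVec u) := by
          rw [Matrix.mulVec_mulVec, Matrix.nonsing_inv_mul Am hAdet, Matrix.one_mulVec]
        calc euclNorm u = euclNorm (Am⁻¹.mulVec (Am.mulVec u)) := by rw [← this]
          _ ≤ K3 * euclNorm (Am.mulVec u) := hK3 _
      calc euclNorm (E.mulVec u) = euclNorm ((Am*B).mulVec ((D-1).mulVec y)) := by rw [e1]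
        _ ≤ K1 * euclNorm ((D-1).mulVec y) := hK1 _
        _ ≤ K1 * (η * euclNorm y) := by
            exact mul_le_mul_of_nonneg_left e3 hK10
        _ ≤ K1 * (η * (K2 * euclNorm u)) := by
            have := hK2 u
            have h5 : η * euclNorm y ≤ η * (K2 * euclNorm u) :=
              mul_le_mul_of_nonneg_left (hK2 u) hη0
            exact mul_le_mul_of_nonneg_left h5 hK10
        _ ≤ K1 * (η * (K2 * (K3 * euclNorm (Am.mulVec u)))) := by
            have h6 : K2 * euclNorm u ≤ K2 * (K3 * euclNorm (Am.mulVec u)) :=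
              mul_le_mul_of_nonneg_left e4 hK20
            have h7 : η * (K2 * euclNorm u) ≤ η * (K2 * (K3 * euclNorm (Am.mulVec u))) :=
              mul_le_mul_of_nonneg_left h6 hη0
            exact mul_le_mul_of_nonneg_left h7 hK10
        _ = (K1*K2*K3) * η * euclNorm (Am.mulVec u) := by ring
        _ ≤ K * θ * euclNorm (Am.mulVec u) := by
            apply mul_le_mul_of_nonneg_right _ (euclNorm_nonneg _)
            rw [hKdef]
            exact mul_le_mul_of_nonneg_left (le_trans hεle (le_refl θ)) (by positivity)
    have htri : euclNorm (Am.mulVec u) ≤ euclNorm (M.mulVec u) + euclNorm (E.mulVec u) := by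
      have heq : Am.mulVec u = M.mulVec u + (-(E.mulVec u)) := by
        rw [hdec, Matrix.add_mulVec]
        abel
      calc euclNorm (Am.mulVec u) = euclNorm (M.mulVec u + (-(E.mulVec u))) := by rw [← heq]
        _ ≤ euclNorm (M.mulVec u) + euclNorm (-(E.mulVec u)) := euclNorm_add_le _ _
        _ = euclNorm (M.mulVec u) + euclNorm (E.mulVec u) := by rw [euclNorm_neg]
    have h9 : θ * (2*(K+1)*(m+δ)) = δ := by
      rw [hθdef]; field_simp
    have hKθ1 : K * θ * (m + δ) ≤ δ/2 := by
      nlinarith [mul_nonneg hθ0.le hmδ.le, mul_nonneg hK0 (mul_nonneg hθ0.le hmδ.le)]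
    have hKθ2 : K * θ ≤ 1/2 := by
      nlinarith [mul_nonneg hK0 hθ0.le]
    have h8 : (1 - K*θ) * (m+δ) ≤ (1 - K*θ) * euclNorm (Am.mulVec u) :=
      mul_le_mul_of_nonneg_left hAu (by linarith)
    nlinarith [euclNorm_nonneg (Am.mulVec u)]
  have hexp1 : Real.exp dm ≤ 1 := by
    calc Real.exp dm ≤ Real.exp 0 := Real.exp_le_exp.mpr hdm0.le
      _ = 1 := Real.exp_zero
  have hμm : Real.exp dm * m ≤ m := by nlinarith
  have hsyst : syst1 M = Real.exp dm * m := by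
    unfold syst1
    apply le_antisymm
    · apply csInf_le
      · refine ⟨0, ?_⟩
        rintro r ⟨u, -, rfl⟩
        exact euclNorm_nonneg _
      · exact ⟨v jm, hvneZ jm, by rw [hnormMv jm, ← hdm]⟩
    · apply le_csInf
      · exact ⟨euclNorm (M.mulVec (intVec (v jm))), v jm, hvneZ jm, rfl⟩
      · rintro r ⟨w, hw0, rfl⟩
        by_cases hw : ∃ i, w = v i ∨ w = -(v i)
        · obtain ⟨i, hi | hi⟩ := hw
          · rw [hi, hnormMv i]
            have := Real.exp_le_exp.mpr (hjm' i)
            nlinarith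
          · rw [hi, hnormMvneg i]
            have := Real.exp_le_exp.mpr (hjm' i)
            nlinarith
        · have := hother w hw0 hw
          linarith
  have hS1 : ∀ w ∈ S1 M, ∃ i, d i = dm ∧ (w = v i ∨ w = -(v i)) := by
    rintro w ⟨hw0, hwm⟩
    rw [hsyst] at hwm
    by_cases hw : ∃ i, w = v i ∨ w = -(v i)
    · obtain ⟨i, hi⟩ := hw
      refine ⟨i, ?_, hi⟩
      have hei : Real.exp (d i) * m = Real.exp dm * m := by
        rcases hi with hi | hi
        · rw [hi] at hwm; rw [hnormMv i] at hwm; exact hwm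
        · rw [hi] at hwm; rw [hnormMvneg i] at hwm; exact hwm
      have := mul_right_cancel₀ (ne_of_gt hm0) hei
      exact Real.exp_eq_exp.mp this
    · exfalso
      have := hother w hw0 hw
      rw [hwm] at this
      linarith
  intro hWR
  unfold WellRounded at hWR
  set s : Set (Fin n) := {i | d i = dm} with hs
  have hnotmem := hv.notMem_span_image (s := s) hjx
  apply hnotmem
  have hsub : intVec '' S1 M ⊆ ↑(Submodule.span ℝ ((fun i => intVec (v i)) '' s)) := by
    rintro _ ⟨w, hw, rfl⟩
    obtain ⟨i, hdi, hi | hi⟩ := hS1 w hw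
    · rw [hi]
      exact Submodule.subset_span ⟨i, hdi, rfl⟩
    · rw [hi, intVec_neg]
      exact neg_mem (Submodule.subset_span ⟨i, hdi, rfl⟩)
  have hle : Submodule.span ℝ (intVec '' S1 M) ≤
      Submodule.span ℝ ((fun i => intVec (v i)) '' s) := Submodule.span_le.mpr hsub
  rw [hWR] at hle
  exact hle Submodule.mem_top
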